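/- Let p(z) = a_0 z^n + a_1 z^{n−1} + ⋯ + a_n be a real polynomial of degree n ≥ 1 with a_0 > 0, let Φ be its associated function with Laurent coefficients s_0, s_1, s_2, … at infinity, and let D_j(Φ) = det[(s_{i+k})_{i,k=0}^{j−1}] and D̂_j(Φ) = det[(s_{i+k+1})_{i,k=0}^{j−1}] be the corresponding Hankel determinants. Then D_j(Φ) = Δ_{2j−1}(p)/a_0^{2j−1} for j = 1, …, ⌊(n+1)/2⌋, and D̂_j(Φ) = (−1)^j Δ_{2j}(p)/a_0^{2j} for j = 1, …, ⌊n/2⌋, where Δ_k(p) are the Hurwitz minors of p. -/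

import Mathlib

open Polynomial

/-- The coefficient `a_m` of `z^(n-m)` in `p` (where `n = p.natDegree`), with the
convention `a_m = 0` for `m < 0` or `m > n`. -/
noncomputable def aCoeff (p : Polynomial ℝ) (m : ℤ) : ℝ :=
  if 0 ≤ m ∧ m ≤ (p.natDegree : ℤ) then p.coeff (p.natDegree - m.toNat) else 0

/-- The `k`-th Hurwitz minor `Δ_k(p) = det[(a_{2j-i})]` with `i, j` running over `1, …, k`;
`Δ_0(p) = 1` (determinant of the empty matrix). -/
noncomputable def hurwitzMinor (p : Polynomial ℝ) (k : ℕ) : ℝ :=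
  Matrix.det (Matrix.of fun i j : Fin k =>
    aCoeff p (2 * ((j : ℤ) + 1) - ((i : ℤ) + 1)))

open Equiv Equiv.Perm

namespace HurwitzAux

def piPerm (k : ℕ) : Equiv.Perm (Fin k) where
  toFun m := ⟨if m.val % 2 = 0 then k - 1 - m.val / 2 else m.val / 2,
    by have := m.isLt; split_ifs <;> omega⟩
  invFun t := ⟨if 2 * t.val + 1 < k then 2 * t.val + 1 else 2 * (k - 1 - t.val),
    by have := t.isLt; split_ifs <;> omega⟩
  left_inv m := by
    have := m.isLt
    apply Fin.ext
    simp only []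
    split_ifs <;> omega
  right_inv t := by
    have := t.isLt
    apply Fin.ext
    simp only []
    split_ifs <;> omega

lemma piPerm_apply (k : ℕ) (m : Fin k) :
    (piPerm k m).val = if m.val % 2 = 0 then k - 1 - m.val / 2 else m.val / 2 := rfl

def lastEquiv (k : ℕ) : Fin k ≃ {x : Fin (k + 1) // x.val < k} where
  toFun i := ⟨⟨i.val, by omega⟩, i.isLt⟩
  invFun x := ⟨x.1.val, x.2⟩
  left_inv i := rfl
  right_inv x := rfl

lemma extendLast_apply_lt {k : ℕ} (σ : Equiv.Perm (Fin k)) (m : Fin (k+1)) (h : m.val < k) :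
    (σ.extendDomain (lastEquiv k)) m = lastEquiv k (σ ((lastEquiv k).symm ⟨m, h⟩)) :=
  Equiv.Perm.extendDomain_apply_subtype σ (lastEquiv k) h

lemma extendLast_apply_last {k : ℕ} (σ : Equiv.Perm (Fin k)) (m : Fin (k+1)) (h : ¬ m.val < k) :
    (σ.extendDomain (lastEquiv k)) m = m :=
  Equiv.Perm.extendDomain_apply_not_subtype σ (lastEquiv k) h

lemma val_add_one_lt {k : ℕ} (m : Fin (k+1)) (h : m.val < k) : (m + 1).val = m.val + 1 := by
  rw [Fin.val_add_one_of_lt]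
  exact Fin.lt_def.mpr (by simp [Fin.last]; omega)

lemma rev_rec (k : ℕ) :
    (Fin.revPerm : Equiv.Perm (Fin (k+1))) * finRotate (k+1) =
      (Fin.revPerm : Equiv.Perm (Fin k)).extendDomain (lastEquiv k) := by
  ext m
  rcases Nat.lt_or_ge m.val k with h | h
  · rw [extendLast_apply_lt _ m h]
    simp only [Equiv.Perm.mul_apply, finRotate_succ_apply, Fin.revPerm_apply]
    have hv := val_add_one_lt m h
    simp [Fin.val_rev, hv, lastEquiv]
  · rw [extendLast_apply_last _ m (by omega)]
    have hm : m = Fin.last k := by apply Fin.ext; simp [Fin.last]; omega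
    subst hm
    simp only [Equiv.Perm.mul_apply, finRotate_succ_apply, Fin.revPerm_apply]
    rw [Fin.last_add_one]
    simp [Fin.val_rev]

lemma sign_revPerm (k : ℕ) :
    Equiv.Perm.sign (Fin.revPerm : Equiv.Perm (Fin k)) = (-1) ^ (k * (k-1) / 2) := by
  induction k with
  | zero =>
      have : (Fin.revPerm : Equiv.Perm (Fin 0)) = 1 := Subsingleton.elim _ _
      simp [this]
  | succ k ih =>
      have h1 := congrArg Equiv.Perm.sign (rev_rec k)
      rw [map_mul, sign_extendDomain, sign_finRotate, Nat.add_sub_cancel, ih] at h1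
      have h2 : Equiv.Perm.sign (Fin.revPerm : Equiv.Perm (Fin (k+1)))
          = (-1 : ℤˣ) ^ (k * (k-1) / 2) * (-1) ^ k := by
        calc Equiv.Perm.sign (Fin.revPerm : Equiv.Perm (Fin (k+1)))
            = (Equiv.Perm.sign (Fin.revPerm : Equiv.Perm (Fin (k+1))) * (-1)^k) * (-1)^k := by
              rw [mul_assoc, ← pow_add]
              simp [pow_add, ← two_mul, pow_mul]
          _ = (-1 : ℤˣ) ^ (k * (k-1) / 2) * (-1) ^ k := by rw [h1]
      rw [h2, ← pow_add]
      congr 1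
      have hmul : (k+1) * (k+1-1) = k * (k-1) + 2*k := by
        cases k <;> simp <;> ring
      omega

end HurwitzAux

namespace HurwitzAux
open Equiv Equiv.Perm

lemma pi_rec (k : ℕ) :
    (piPerm (k+1)) * finRotate (k+1) =
      ((Fin.revPerm : Equiv.Perm (Fin k)) * piPerm k).extendDomain (lastEquiv k) := by
  ext m
  rcases Nat.lt_or_ge m.val k with h | h
  · rw [extendLast_apply_lt _ m h]
    simp only [Equiv.Perm.mul_apply, finRotate_succ_apply]
    have hv := val_add_one_lt m h
    have h1 : ((piPerm (k+1)) (m + 1)).val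
        = if (m.val + 1) % 2 = 0 then k + 1 - 1 - (m.val+1) / 2 else (m.val+1) / 2 := by
      rw [piPerm_apply]; rw [hv]
    have h2 : (((lastEquiv k) ((Fin.revPerm) ((piPerm k) ((lastEquiv k).symm ⟨m, h⟩)))) : Fin (k+1)).val
        = k - 1 - (if m.val % 2 = 0 then k - 1 - m.val / 2 else m.val / 2) := by
      simp [lastEquiv, Fin.val_rev, piPerm_apply]
      omega
    rw [h1, h2]
    have := m.isLt
    split_ifs <;> omega
  · rw [extendLast_apply_last _ m (by omega)]
    have hm : m = Fin.last k := by apply Fin.ext; simp [Fin.last]; omega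
    subst hm
    simp only [Equiv.Perm.mul_apply, finRotate_succ_apply]
    rw [Fin.last_add_one]
    rw [show ((piPerm (k+1)) 0).val = _ from piPerm_apply (k+1) 0]
    simp [Fin.last]

lemma sign_step (k : ℕ) :
    Equiv.Perm.sign (piPerm (k+1))
      = Equiv.Perm.sign (Fin.revPerm : Equiv.Perm (Fin k)) * Equiv.Perm.sign (piPerm k)
        * (-1) ^ k := by
  have h1 := congrArg Equiv.Perm.sign (pi_rec k)
  rw [map_mul, sign_extendDomain, sign_finRotate, Nat.add_sub_cancel, map_mul] at h1
  calc Equiv.Perm.sign (piPerm (k+1))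
      = (Equiv.Perm.sign (piPerm (k+1)) * (-1)^k) * (-1)^k := by
        rw [mul_assoc, ← pow_add]
        simp [pow_add, ← two_mul, pow_mul]
    _ = _ := by rw [h1]

lemma rev_prod (k : ℕ) :
    Equiv.Perm.sign (Fin.revPerm : Equiv.Perm (Fin (k+1)))
      * Equiv.Perm.sign (Fin.revPerm : Equiv.Perm (Fin k)) = (-1) ^ k := by
  have h1 := congrArg Equiv.Perm.sign (rev_rec k)
  rw [map_mul, sign_extendDomain, sign_finRotate, Nat.add_sub_cancel] at h1
  calc Equiv.Perm.sign (Fin.revPerm : Equiv.Perm (Fin (k+1)))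
      * Equiv.Perm.sign (Fin.revPerm : Equiv.Perm (Fin k))
      = (Equiv.Perm.sign (Fin.revPerm : Equiv.Perm (Fin (k+1))) * (-1)^k)
        * ((-1:ℤˣ)^k)⁻¹ * Equiv.Perm.sign (Fin.revPerm : Equiv.Perm (Fin k)) := by
        group
    _ = Equiv.Perm.sign (Fin.revPerm : Equiv.Perm (Fin k))
        * ((-1:ℤˣ)^k)⁻¹ * Equiv.Perm.sign (Fin.revPerm : Equiv.Perm (Fin k)) := by rw [h1]
    _ = ((-1:ℤˣ)^k)⁻¹ * (Equiv.Perm.sign (Fin.revPerm : Equiv.Perm (Fin k))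
        * Equiv.Perm.sign (Fin.revPerm : Equiv.Perm (Fin k))) := by
          simp only [mul_comm, mul_left_comm, mul_assoc]
    _ = (-1) ^ k := by
        rw [← map_mul]
        simp [← pow_add, ← two_mul, pow_mul]

lemma sign_piPerm (k : ℕ) :
    Equiv.Perm.sign (piPerm k) = (-1) ^ ((k / 2) * ((k + 1) / 2)) := by
  induction k using Nat.twoStepInduction with
  | zero =>
      have : piPerm 0 = 1 := Subsingleton.elim _ _
      simp [this]
  | one =>
      have : piPerm 1 = 1 := Subsingleton.elim _ _
      simp [this]
  | more k ih _ =>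
      rw [sign_step (k+1), sign_step k, show
        Equiv.Perm.sign (Fin.revPerm : Equiv.Perm (Fin (k+1))) *
          (Equiv.Perm.sign (Fin.revPerm : Equiv.Perm (Fin k)) * Equiv.Perm.sign (piPerm k) * (-1) ^ k)
          * (-1) ^ (k+1)
        = (Equiv.Perm.sign (Fin.revPerm : Equiv.Perm (Fin (k+1)))
            * Equiv.Perm.sign (Fin.revPerm : Equiv.Perm (Fin k)))
          * Equiv.Perm.sign (piPerm k) * ((-1) ^ k * (-1) ^ (k+1)) from by
            simp only [mul_comm, mul_left_comm, mul_assoc],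
        rev_prod, ih]
      rw [← pow_add, ← pow_add, ← pow_add]
      have hexp : k + k / 2 * ((k + 1) / 2) + (k + (k + 1))
          = (k + 2) / 2 * ((k + 2 + 1) / 2) + 2 * k := by
        rcases Nat.even_or_odd k with ⟨t, ht⟩ | ⟨t, ht⟩ <;> subst ht
        · have h1 : (t + t) / 2 = t := by omega
          have h2 : (t + t + 1) / 2 = t := by omega
          have h3 : (t + t + 2) / 2 = t + 1 := by omega
          have h4 : (t + t + 2 + 1) / 2 = t + 1 := by omega
          rw [h1, h2, h3, h4]; ring
        · have h1 : (2 * t + 1) / 2 = t := by omega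
          have h2 : (2 * t + 1 + 1) / 2 = t + 1 := by omega
          have h3 : (2 * t + 1 + 2) / 2 = t + 1 := by omega
          have h4 : (2 * t + 1 + 2 + 1) / 2 = t + 2 := by omega
          rw [h1, h2, h3, h4]; ring
      rw [hexp]
      rw [pow_add, pow_mul]
      simp [pow_mul]

end HurwitzAux

namespace HurwitzAux

noncomputable def ext (f : ℕ → ℝ) (z : ℤ) : ℝ := if 0 ≤ z then f z.toNat else 0

lemma ext_coe (f : ℕ → ℝ) (m : ℕ) : ext f (m : ℤ) = f m := by simp [ext]

lemma ext_neg (f : ℕ → ℝ) (z : ℤ) (h : z < 0) : ext f z = 0 := by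
  simp [ext, not_le.mpr h]

lemma conv (f g : ℕ → ℝ) (d j k : ℕ) (hj : j < k) :
    ∑ c ∈ Finset.range k, ext f ((c:ℤ) - d) * ext g ((j:ℤ) - c)
      = ext (fun m => PowerSeries.coeff m (PowerSeries.mk f * PowerSeries.mk g))
          ((j:ℤ) - d) := by
  have hsmall : ∑ c ∈ Finset.range k, ext f ((c:ℤ) - d) * ext g ((j:ℤ) - c)
      = ∑ c ∈ Finset.range (j+1), ext f ((c:ℤ) - d) * ext g ((j:ℤ) - c) := by
    refine (Finset.sum_subset (by simp [Finset.range_subset]; omega) ?_).symm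
    intro c hc hcn
    simp only [Finset.mem_range] at hc hcn
    rw [ext_neg g _ (by omega)]
    ring
  rw [hsmall]
  rcases le_or_gt d j with hd | hd
  · have h2 : ∑ c ∈ Finset.range (j+1), ext f ((c:ℤ) - d) * ext g ((j:ℤ) - c)
        = ∑ c ∈ Finset.Ico d (j+1), ext f ((c:ℤ) - d) * ext g ((j:ℤ) - c) := by
      refine (Finset.sum_subset (by rw [Finset.range_eq_Ico]; exact Finset.Ico_subset_Ico (by omega) le_rfl) ?_).symm
      intro c hc hcn
      simp only [Finset.mem_range] at hc
      simp only [Finset.mem_Ico] at hcn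
      rw [ext_neg f _ (by omega)]
      ring
    rw [h2, Finset.sum_Ico_eq_sum_range]
    have hrhs : ext (fun m => PowerSeries.coeff m (PowerSeries.mk f * PowerSeries.mk g))
          ((j:ℤ) - d)
        = PowerSeries.coeff (j - d) (PowerSeries.mk f * PowerSeries.mk g) := by
      rw [show (j:ℤ) - d = ((j - d : ℕ) : ℤ) by omega, ext_coe]
    rw [hrhs, PowerSeries.coeff_mul, Finset.Nat.sum_antidiagonal_eq_sum_range_succ_mk]
    rw [show j + 1 - d = j - d + 1 by omega]
    apply Finset.sum_congr rfl
    intro u hu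
    simp only [Finset.mem_range] at hu
    rw [show ((d + u : ℕ) : ℤ) - (d:ℤ) = ((u:ℕ):ℤ) by push_cast; ring, ext_coe,
      show ((j:ℕ):ℤ) - ((d + u : ℕ):ℤ) = ((j - d - u : ℕ) : ℤ) by push_cast [Nat.cast_sub]; omega,
      ext_coe]
    simp [PowerSeries.coeff_mk]
  · rw [ext_neg _ _ (by omega)]
    apply Finset.sum_eq_zero
    intro c hc
    simp only [Finset.mem_range] at hc
    rw [ext_neg f _ (by omega)]
    ring

end HurwitzAux

namespace HurwitzAux
open Equiv

def erFun (k : ℕ) : Fin ((k+1)/2) ⊕ Fin (k/2) → Fin k :=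
  Sum.elim (fun r => ⟨2*r.val, by have := r.isLt; omega⟩)
    (fun r => ⟨2*r.val+1, by have := r.isLt; omega⟩)

lemma erFun_inl (k : ℕ) (r : Fin ((k+1)/2)) : (erFun k (Sum.inl r)).val = 2*r.val := rfl
lemma erFun_inr (k : ℕ) (r : Fin (k/2)) : (erFun k (Sum.inr r)).val = 2*r.val+1 := rfl

def ecFun (k : ℕ) : Fin ((k+1)/2) ⊕ Fin (k/2) → Fin k :=
  Sum.elim (fun c => ⟨k - 1 - c.val, by have := c.isLt; omega⟩)
    (fun c => ⟨c.val, by have := c.isLt; omega⟩)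

lemma ecFun_inl (k : ℕ) (c : Fin ((k+1)/2)) : (ecFun k (Sum.inl c)).val = k - 1 - c.val := rfl
lemma ecFun_inr (k : ℕ) (c : Fin (k/2)) : (ecFun k (Sum.inr c)).val = c.val := rfl

lemma erFun_bij (k : ℕ) : Function.Bijective (erFun k) := by
  rw [Fintype.bijective_iff_injective_and_card]
  refine ⟨?_, by simp; omega⟩
  intro x y hxy
  have hv := congrArg Fin.val hxy
  rcases x with x | x <;> rcases y with y | y
  · rw [erFun_inl, erFun_inl] at hv
    exact congrArg Sum.inl (Fin.ext (by omega))
  · rw [erFun_inl, erFun_inr] at hv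
    omega
  · rw [erFun_inr, erFun_inl] at hv
    omega
  · rw [erFun_inr, erFun_inr] at hv
    exact congrArg Sum.inr (Fin.ext (by omega))

lemma ecFun_bij (k : ℕ) : Function.Bijective (ecFun k) := by
  rw [Fintype.bijective_iff_injective_and_card]
  refine ⟨?_, by simp; omega⟩
  intro x y hxy
  have hv := congrArg Fin.val hxy
  rcases x with x | x <;> rcases y with y | y
  · rw [ecFun_inl, ecFun_inl] at hv
    exact congrArg Sum.inl (Fin.ext (by have := x.isLt; have := y.isLt; omega))
  · rw [ecFun_inl, ecFun_inr] at hv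
    have := x.isLt; have := y.isLt; omega
  · rw [ecFun_inr, ecFun_inl] at hv
    have := x.isLt; have := y.isLt; omega
  · rw [ecFun_inr, ecFun_inr] at hv
    exact congrArg Sum.inr (Fin.ext hv)

lemma pi_er_eq_ec (k : ℕ) (y : Fin ((k+1)/2) ⊕ Fin (k/2)) :
    piPerm k (erFun k y) = ecFun k y := by
  apply Fin.val_injective
  rw [piPerm_apply]
  rcases y with y | y
  · rw [erFun_inl, ecFun_inl]
    have := y.isLt
    rw [if_pos (by omega)]
    omega
  · rw [erFun_inr, ecFun_inr]
    have := y.isLt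
    rw [if_neg (by omega)]
    omega

lemma core (a : ℤ → ℝ) (t s : ℕ → ℝ)
    (haneg : ∀ z : ℤ, z < 0 → a z = 0)
    (hInv : PowerSeries.mk (fun m => a (2*m)) * PowerSeries.mk t = 1)
    (hS : PowerSeries.mk (fun m => a (2*m+1))
        = PowerSeries.mk (fun m => a (2*m)) * PowerSeries.mk s)
    (k : ℕ) :
    Matrix.det (Matrix.of fun i j : Fin k => a (2 * ((j : ℤ) + 1) - ((i : ℤ) + 1)))
      = (a 0) ^ k * ((Equiv.Perm.sign (piPerm k) : ℤ) : ℝ)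
        * Matrix.det (Matrix.of fun r c : Fin ((k+1)/2) =>
            ext s ((k:ℤ) - 1 - (r:ℤ) - (c:ℤ))) := by
  classical
  have ha_even : ∀ z : ℤ, a (2*z) = ext (fun m => a (2*m)) z := by
    intro z
    rcases le_or_gt 0 z with h | h
    · rw [ext, if_pos h]
      congr 1
      omega
    · rw [ext_neg _ _ h, haneg _ (by omega)]
  have ha_odd : ∀ z : ℤ, a (2*z+1) = ext (fun m => a (2*m+1)) z := by
    intro z
    rcases le_or_gt 0 z with h | h
    · rw [ext, if_pos h]
      congr 1
      omega
    · rw [ext_neg _ _ h, haneg _ (by omega)]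
  set H : Matrix (Fin k) (Fin k) ℝ :=
    Matrix.of fun i j : Fin k => a (2 * ((j : ℤ) + 1) - ((i : ℤ) + 1)) with hH
  set W : Matrix (Fin k) (Fin k) ℝ :=
    Matrix.of fun i j : Fin k => ext t ((j:ℤ) - (i:ℤ)) with hW
  set M : Matrix (Fin k) (Fin k) ℝ :=
    Matrix.of (fun i j : Fin k =>
      if i.val % 2 = 0 then ext s ((j:ℤ) - (i.val / 2 : ℕ))
      else (if j.val = i.val / 2 then (1:ℝ) else 0)) with hM
  have hOT : PowerSeries.mk (fun m => a (2*m+1)) * PowerSeries.mk t = PowerSeries.mk s := by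
    rw [hS, mul_assoc, mul_comm (PowerSeries.mk s), ← mul_assoc, hInv, one_mul]
  -- step 1 : H * W = M
  have step1 : H * W = M := by
    ext i j
    rw [Matrix.mul_apply]
    have hshow : ∀ c : Fin k, H i c * W c j
        = a (2 * ((c:ℤ) + 1) - ((i:ℤ) + 1)) * ext t ((j:ℤ) - (c:ℤ)) := fun c => rfl
    rw [Finset.sum_congr rfl (fun c _ => hshow c)]
    rw [Fin.sum_univ_eq_sum_range
      (fun c : ℕ => a (2 * ((c:ℤ) + 1) - ((i:ℤ) + 1)) * ext t ((j:ℤ) - (c:ℤ))) k]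
    have hMij : M i j = if i.val % 2 = 0 then ext s ((j:ℤ) - (i.val / 2 : ℕ))
        else (if j.val = i.val / 2 then (1:ℝ) else 0) := rfl
    rw [hMij]
    rcases Nat.even_or_odd i.val with ⟨w, hw⟩ | ⟨w, hw⟩
    · have hsum : ∀ c ∈ Finset.range k,
          a (2 * ((c:ℤ) + 1) - ((i:ℤ) + 1)) * ext t ((j:ℤ) - (c:ℤ))
          = ext (fun m => a (2*m+1)) ((c:ℤ) - (w:ℤ)) * ext t ((j:ℤ) - (c:ℤ)) := by
        intro c _
        rw [show 2 * ((c:ℤ) + 1) - ((i:ℤ) + 1) = 2 * ((c:ℤ) - w) + 1 by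
          have : (i : ℤ) = 2 * w := by omega
          rw [this]; ring, ha_odd]
      rw [Finset.sum_congr rfl hsum, conv _ _ w j.val k j.isLt]
      have hcoe : (fun m => (PowerSeries.coeff m)
          (PowerSeries.mk (fun m => a (2*m+1)) * PowerSeries.mk t)) = s := by
        funext m
        rw [hOT, PowerSeries.coeff_mk]
      rw [hcoe, if_pos (by omega : i.val % 2 = 0)]
      congr 1
      omega
    · have hsum : ∀ c ∈ Finset.range k,
          a (2 * ((c:ℤ) + 1) - ((i:ℤ) + 1)) * ext t ((j:ℤ) - (c:ℤ))
          = ext (fun m => a (2*m)) ((c:ℤ) - (w:ℤ)) * ext t ((j:ℤ) - (c:ℤ)) := by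
        intro c _
        rw [show 2 * ((c:ℤ) + 1) - ((i:ℤ) + 1) = 2 * ((c:ℤ) - w) by
          have : (i : ℤ) = 2 * w + 1 := by omega
          rw [this]; ring, ha_even]
      rw [Finset.sum_congr rfl hsum, conv _ _ w j.val k j.isLt, hInv]
      rw [if_neg (by omega : ¬ i.val % 2 = 0)]
      have hiw : i.val / 2 = w := by omega
      rw [hiw]
      by_cases hjw : j.val = w
      · rw [if_pos hjw, show (j:ℤ) - (w:ℤ) = ((0:ℕ):ℤ) by omega, ext_coe]
        simp
      · rw [if_neg hjw]
        rcases le_or_gt 0 ((j:ℤ) - (w:ℤ)) with h | h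
        · rw [ext, if_pos h]
          simp only [PowerSeries.coeff_one]
          rw [if_neg (by omega)]
        · rw [ext_neg _ _ h]
  -- step 2 : det W
  have step2 : W.det = (t 0) ^ k := by
    rw [Matrix.det_of_upperTriangular (by
      intro i j hij
      exact ext_neg _ _ (by
        have : j.val < i.val := hij
        omega))]
    have hdiag : ∀ i : Fin k, W i i = t 0 := by
      intro i
      have : W i i = ext t ((i:ℤ) - (i:ℤ)) := rfl
      rw [this, sub_self, show (0:ℤ) = ((0:ℕ):ℤ) by norm_num, ext_coe]
    rw [Finset.prod_congr rfl (fun i _ => hdiag i)]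
    simp
  let Er : (Fin ((k+1)/2) ⊕ Fin (k/2)) ≃ Fin k := Equiv.ofBijective _ (erFun_bij k)
  -- blocks
  set C : Matrix (Fin ((k+1)/2)) (Fin ((k+1)/2)) ℝ :=
    Matrix.of (fun r c : Fin ((k+1)/2) => ext s ((k:ℤ) - 1 - (r:ℤ) - (c:ℤ))) with hC
  set B : Matrix (Fin ((k+1)/2)) (Fin (k/2)) ℝ :=
    Matrix.of (fun (r : Fin ((k+1)/2)) (c : Fin (k/2)) => ext s ((c:ℤ) - (r:ℤ))) with hB
  have hsub : M.submatrix (erFun k) (ecFun k) = Matrix.fromBlocks C B 0 1 := by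
    ext x y
    have hval : M.submatrix (erFun k) (ecFun k) x y
        = if (erFun k x).val % 2 = 0 then ext s (((ecFun k y).val : ℤ) - ((erFun k x).val / 2 : ℕ))
          else (if (ecFun k y).val = (erFun k x).val / 2 then (1:ℝ) else 0) := rfl
    rw [hval]
    rcases x with x | x <;> rcases y with y | y
    · rw [erFun_inl, ecFun_inl, if_pos (by omega)]
      have hx := x.isLt
      have hy := y.isLt
      show _ = ext s ((k:ℤ) - 1 - (x:ℤ) - (y:ℤ))
      congr 1
      omega
    · rw [erFun_inl, ecFun_inr, if_pos (by omega)]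
      have hx := x.isLt
      show _ = ext s ((y:ℤ) - (x:ℤ))
      congr 1
      omega
    · rw [erFun_inr, ecFun_inl, if_neg (by omega)]
      have hx := x.isLt
      have hy := y.isLt
      rw [if_neg (by omega)]
      rfl
    · rw [erFun_inr, ecFun_inr, if_neg (by omega)]
      have hx := x.isLt
      have hy := y.isLt
      show _ = (1 : Matrix (Fin (k/2)) (Fin (k/2)) ℝ) x y
      rw [show (2*x.val+1)/2 = x.val by omega, Matrix.one_apply]
      by_cases hxy : x = y
      · rw [if_pos (by rw [hxy]), if_pos hxy]
      · rw [if_neg (fun hc => hxy (Fin.ext hc.symm)), if_neg hxy]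
  -- determinant of M
  have hdetM : ((Equiv.Perm.sign (piPerm k) : ℤ) : ℝ) * M.det = C.det := by
    have e1 : (M.submatrix id (piPerm k)).submatrix Er Er = M.submatrix (erFun k) (ecFun k) := by
      ext x y
      show M (id (Er x)) (piPerm k (Er y)) = M (erFun k x) (ecFun k y)
      rw [show Er y = erFun k y from rfl, pi_er_eq_ec k y]
      rfl
    have e2 : (M.submatrix id (piPerm k)).det
        = ((Equiv.Perm.sign (piPerm k) : ℤ) : ℝ) * M.det := by
      exact_mod_cast Matrix.det_permute' (piPerm k) M
    calc ((Equiv.Perm.sign (piPerm k) : ℤ) : ℝ) * M.det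
        = (M.submatrix id (piPerm k)).det := e2.symm
      _ = ((M.submatrix id (piPerm k)).submatrix Er Er).det :=
          (Matrix.det_submatrix_equiv_self Er _).symm
      _ = (M.submatrix (erFun k) (ecFun k)).det := by rw [e1]
      _ = (Matrix.fromBlocks C B 0 1).det := by rw [hsub]
      _ = C.det * (1 : Matrix (Fin (k/2)) (Fin (k/2)) ℝ).det :=
          Matrix.det_fromBlocks_zero₂₁ _ _ _
      _ = C.det := by rw [Matrix.det_one, mul_one]
  -- put it together
  have hsign2 : ((Equiv.Perm.sign (piPerm k) : ℤ) : ℝ)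
      * ((Equiv.Perm.sign (piPerm k) : ℤ) : ℝ) = 1 := by
    rcases Int.units_eq_one_or (Equiv.Perm.sign (piPerm k)) with h | h <;> rw [h] <;> norm_num
  have hconst : a 0 * t 0 = 1 := by
    have h := congrArg ((PowerSeries.constantCoeff : PowerSeries ℝ →+* ℝ)) hInv
    rw [map_mul, PowerSeries.constantCoeff_mk, PowerSeries.constantCoeff_mk, map_one] at h
    simpa using h
  have hHW : H.det * (t 0) ^ k = M.det := by
    rw [← step2, ← Matrix.det_mul, step1]
  calc H.det = H.det * ((a 0 * t 0) ^ k) := by rw [hconst]; ring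
    _ = (a 0)^k * (H.det * (t 0)^k) := by ring
    _ = (a 0)^k * M.det := by rw [hHW]
    _ = (a 0)^k * (((Equiv.Perm.sign (piPerm k) : ℤ) : ℝ)
          * (((Equiv.Perm.sign (piPerm k) : ℤ) : ℝ) * M.det)) := by
        rw [← mul_assoc ((Equiv.Perm.sign (piPerm k) : ℤ) : ℝ), hsign2, one_mul]
    _ = (a 0)^k * (((Equiv.Perm.sign (piPerm k) : ℤ) : ℝ) * C.det) := by rw [hdetM]
    _ = _ := by ring

end HurwitzAux


open Polynomial HurwitzAux

/-- Hankel determinants of the associated function `Φ` versus Hurwitz minors.  Writing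
`p(z) = pe(z²) + z·po(z²)` of degree `n ≥ 1` with positive leading coefficient, the
associated function is `Φ = num/den` with `num = po`, `den = pe` for even `n` and
`num = pe`, `den = X·po` for odd `n`; its Laurent coefficients `s_0, s_1, …` at infinity
are determined by the formal power series identity `rev(num) = rev(den) · Σ_j s_j w^j`
(coefficient reversal at expected degrees `l - 1` and `l`, `l = ⌊(n+1)/2⌋`).  Then
`D_j(Φ) = Δ_{2j-1}(p)/a_0^{2j-1}` for `j = 1, …, ⌊(n+1)/2⌋` and
`D̂_j(Φ) = (-1)^j Δ_{2j}(p)/a_0^{2j}` for `j = 1, …, ⌊n/2⌋`. -/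
theorem hankel_dets_of_assoc_function_eq_hurwitz_minors
    (n : ℕ) (hn : 1 ≤ n) (p pe po : Polynomial ℝ)
    (hdeg : p.natDegree = n) (hlead : 0 < p.leadingCoeff)
    (hparts : p = pe.comp (Polynomial.X ^ 2) + Polynomial.X * po.comp (Polynomial.X ^ 2))
    (s : ℕ → ℝ)
    (hs : PowerSeries.mk (fun k => if k ≤ (n + 1) / 2 - 1 then
            (if Even n then po else pe).coeff ((n + 1) / 2 - 1 - k) else 0) =
          PowerSeries.mk (fun k => if k ≤ (n + 1) / 2 then
            (if Even n then pe else Polynomial.X * po).coeff ((n + 1) / 2 - k) else 0) *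
            PowerSeries.mk s) :
    (∀ j, 1 ≤ j → j ≤ (n + 1) / 2 →
        Matrix.det (Matrix.of fun i k : Fin j => s ((i : ℕ) + (k : ℕ))) =
          hurwitzMinor p (2 * j - 1) / p.leadingCoeff ^ (2 * j - 1)) ∧
    (∀ j, 1 ≤ j → j ≤ n / 2 →
        Matrix.det (Matrix.of fun i k : Fin j => s ((i : ℕ) + (k : ℕ) + 1)) =
          (-1 : ℝ) ^ j * hurwitzMinor p (2 * j) / p.leadingCoeff ^ (2 * j)) := by
  classical
  -- coefficient facts
  have hpc2 : ∀ m : ℕ, p.coeff (2*m) = pe.coeff m := by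
    intro m
    rw [hparts, coeff_add, ← Polynomial.expand_eq_comp_X_pow,
      Polynomial.coeff_expand (by norm_num : 0 < 2)]
    rw [if_pos ⟨m, by ring⟩]
    have h2 : (Polynomial.X * po.comp (Polynomial.X ^ 2)).coeff (2*m) = 0 := by
      rw [← Polynomial.expand_eq_comp_X_pow]
      rcases Nat.eq_zero_or_pos m with hm | hm
      · subst hm
        simpa using Polynomial.coeff_X_mul_zero (Polynomial.expand ℝ 2 po)
      · rw [show 2*m = (2*m-1)+1 by omega, Polynomial.coeff_X_mul,
          Polynomial.coeff_expand (by norm_num : 0 < 2), if_neg (by omega)]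
    rw [h2, add_zero]
    congr 1
    omega
  have hpc21 : ∀ m : ℕ, p.coeff (2*m+1) = po.coeff m := by
    intro m
    rw [hparts, coeff_add, ← Polynomial.expand_eq_comp_X_pow,
      Polynomial.coeff_expand (by norm_num : 0 < 2), if_neg (by omega)]
    rw [← Polynomial.expand_eq_comp_X_pow (p := 2) (f := po), Polynomial.coeff_X_mul,
      Polynomial.coeff_expand (by norm_num : 0 < 2), if_pos ⟨m, by ring⟩, zero_add]
    congr 1
    omega
  have hlc : aCoeff p 0 = p.leadingCoeff := by
    rw [aCoeff, if_pos (by omega)]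
    simpa using Polynomial.coeff_natDegree (p := p)
  have hlc0 : p.leadingCoeff ≠ 0 := ne_of_gt hlead
  have haneg : ∀ z : ℤ, z < 0 → aCoeff p z = 0 := fun z hz => if_neg (by omega)
  -- identification of the power series
  have hnum : (fun k' : ℕ => if k' ≤ (n + 1) / 2 - 1 then
      (if Even n then po else pe).coeff ((n + 1) / 2 - 1 - k') else 0)
      = (fun m : ℕ => aCoeff p (2*(m:ℤ)+1)) := by
    funext m
    have h1 : (2*(m:ℤ)+1) = ((2*m+1 : ℕ) : ℤ) := by push_cast; ring
    rw [h1, aCoeff]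
    simp only [hdeg, Int.toNat_natCast]
    rcases Nat.even_or_odd n with ⟨l, hnl⟩ | ⟨l, hnl⟩
    · -- n = 2l even
      have hev : Even n := ⟨l, hnl⟩
      rw [if_pos hev]
      by_cases hm : m ≤ (n+1)/2 - 1
      · rw [if_pos hm, if_pos (by omega)]
        rw [show n - (2*m+1) = 2*((n+1)/2 - 1 - m)+1 by omega, hpc21]
      · rw [if_neg hm, if_neg (by omega)]
    · -- n = 2l+1 odd
      rw [if_neg (show ¬ Even n by rw [Nat.even_iff]; omega)]
      by_cases hm : m ≤ (n+1)/2 - 1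
      · rw [if_pos hm, if_pos (by omega)]
        rw [show n - (2*m+1) = 2*((n+1)/2 - 1 - m) by omega, hpc2]
      · rw [if_neg hm, if_neg (by omega)]
  have hden : (fun k' : ℕ => if k' ≤ (n + 1) / 2 then
      (if Even n then pe else Polynomial.X * po).coeff ((n + 1) / 2 - k') else 0)
      = (fun m : ℕ => aCoeff p (2*(m:ℤ))) := by
    funext m
    have h1 : (2*(m:ℤ)) = ((2*m : ℕ) : ℤ) := by push_cast; ring
    rw [h1, aCoeff]
    simp only [hdeg, Int.toNat_natCast]
    rcases Nat.even_or_odd n with ⟨l, hnl⟩ | ⟨l, hnl⟩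
    · have hev : Even n := ⟨l, hnl⟩
      rw [if_pos hev]
      by_cases hm : m ≤ (n+1)/2
      · rw [if_pos hm, if_pos (by omega)]
        rw [show n - 2*m = 2*((n+1)/2 - m) by omega, hpc2]
      · rw [if_neg hm, if_neg (by omega)]
    · rw [if_neg (show ¬ Even n by rw [Nat.even_iff]; omega)]
      by_cases hm : m ≤ (n+1)/2
      · rw [if_pos hm]
        by_cases hm2 : m ≤ (n+1)/2 - 1
        · rw [if_pos (by omega)]
          rw [show (n+1)/2 - m = ((n+1)/2 - m - 1) + 1 by omega, Polynomial.coeff_X_mul]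
          rw [show n - 2*m = 2*((n+1)/2 - m - 1)+1 by omega, hpc21]
        · rw [show (n+1)/2 - m = 0 by omega]
          rw [if_neg (by omega)]
          simpa using Polynomial.coeff_X_mul_zero po
      · rw [if_neg hm, if_neg (by omega)]
  have hS : PowerSeries.mk (fun m : ℕ => aCoeff p (2*(m:ℤ)+1))
      = PowerSeries.mk (fun m : ℕ => aCoeff p (2*(m:ℤ))) * PowerSeries.mk s := by
    rw [← hnum, ← hden]
    exact hs
  set t : ℕ → ℝ := fun m =>
    PowerSeries.coeff m (PowerSeries.mk (fun m : ℕ => aCoeff p (2*(m:ℤ))))⁻¹ with ht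
  have hInv : PowerSeries.mk (fun m : ℕ => aCoeff p (2*(m:ℤ))) * PowerSeries.mk t = 1 := by
    have h1 : PowerSeries.mk t = (PowerSeries.mk (fun m : ℕ => aCoeff p (2*(m:ℤ))))⁻¹ :=
      PowerSeries.ext fun m => by rw [PowerSeries.coeff_mk]
    rw [h1]
    apply PowerSeries.mul_inv_cancel
    rw [PowerSeries.constantCoeff_mk]
    rw [show (2*((0:ℕ):ℤ)) = 0 by norm_num, hlc]
    exact hlc0
  have key := core (aCoeff p) t s haneg hInv hS
  have ha0 : aCoeff p 0 = p.leadingCoeff := hlc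
  constructor
  · -- odd case k = 2j-1
    intro j hj1 _
    have hk : (2*j-1+1)/2 = j := by omega
    have hkey := key (2*j-1)
    -- sign is 1
    have hsign : Equiv.Perm.sign (piPerm (2*j-1)) = 1 := by
      rw [sign_piPerm]
      apply Even.neg_one_pow
      have : (2*j-1)/2 = j - 1 := by omega
      rw [this, hk]
      rcases Nat.even_or_odd (j-1) with he | ho
      · exact he.mul_right j
      · have : Even j := by
          rcases Nat.even_or_odd j with h | h
          · exact h
          · exfalso; rcases ho with ⟨c, hc⟩; rcases h with ⟨c', hc'⟩; omega
        exact this.mul_left (j-1)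
    -- Hankel identification
    let e : Fin j ≃ Fin ((2*j-1+1)/2) := Fin.revPerm.trans (finCongr hk.symm)
    have he : ∀ i : Fin j, ((e i : Fin ((2*j-1+1)/2)) : ℕ) = j - 1 - i.val := by
      intro i
      simp only [e, Equiv.trans_apply, Fin.revPerm_apply, finCongr_apply, Fin.coe_cast,
        Fin.val_rev]
      omega
    have hHankel : (Matrix.of fun i k' : Fin j => s ((i : ℕ) + (k' : ℕ)))
        = ((Matrix.of fun r c : Fin ((2*j-1+1)/2) =>
            ext s (((2*j-1 : ℕ):ℤ) - 1 - (r:ℤ) - (c:ℤ))).submatrix e e) := by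
      ext r c
      show s (r.val + c.val) = ext s (((2*j-1 : ℕ):ℤ) - 1 - ((e r : Fin _):ℤ) - ((e c : Fin _):ℤ))
      rw [show (((2*j-1 : ℕ):ℤ) - 1 - ((e r : Fin _):ℤ) - ((e c : Fin _):ℤ))
          = ((r.val + c.val : ℕ) : ℤ) by
        have h1 := he r
        have h2 := he c
        have h3 := r.isLt
        have h4 := c.isLt
        omega, ext_coe]
    rw [hHankel, Matrix.det_submatrix_equiv_self e, hurwitzMinor, hkey, hsign, ha0]
    rw [show ((((1 : ℤˣ) : ℤ)) : ℝ) = 1 by norm_num]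
    generalize (Matrix.of fun r c : Fin ((2*j-1+1)/2) =>
      ext s (((2*j-1 : ℕ):ℤ) - 1 - (r:ℤ) - (c:ℤ))).det = D
    rw [eq_div_iff (pow_ne_zero _ hlc0)]
    ring
  · -- even case k = 2j
    intro j hj1 _
    have hk : (2*j+1)/2 = j := by omega
    have hkey := key (2*j)
    have hsign : ((Equiv.Perm.sign (piPerm (2*j)) : ℤ) : ℝ) = (-1 : ℝ)^j := by
      rw [sign_piPerm]
      have h1 : (2*j)/2 = j := by omega
      have h2 : (2*j+1)/2 = j := by omega
      rw [h1, h2]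
      rcases Nat.even_or_odd j with he | ho
      · rw [Even.neg_one_pow (he.mul_right j), Even.neg_one_pow he]
        norm_num
      · rw [Odd.neg_one_pow (ho.mul ho), Odd.neg_one_pow ho]
        norm_num
    let e : Fin j ≃ Fin ((2*j+1)/2) := Fin.revPerm.trans (finCongr hk.symm)
    have he : ∀ i : Fin j, ((e i : Fin ((2*j+1)/2)) : ℕ) = j - 1 - i.val := by
      intro i
      simp only [e, Equiv.trans_apply, Fin.revPerm_apply, finCongr_apply, Fin.coe_cast,
        Fin.val_rev]
      omega
    have hHankel : (Matrix.of fun i k' : Fin j => s ((i : ℕ) + (k' : ℕ) + 1))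
        = ((Matrix.of fun r c : Fin ((2*j+1)/2) =>
            ext s (((2*j : ℕ):ℤ) - 1 - (r:ℤ) - (c:ℤ))).submatrix e e) := by
      ext r c
      show s (r.val + c.val + 1) = ext s (((2*j : ℕ):ℤ) - 1 - ((e r : Fin _):ℤ) - ((e c : Fin _):ℤ))
      rw [show (((2*j : ℕ):ℤ) - 1 - ((e r : Fin _):ℤ) - ((e c : Fin _):ℤ))
          = ((r.val + c.val + 1 : ℕ) : ℤ) by
        have h1 := he r
        have h2 := he c
        have h3 := r.isLt
        have h4 := c.isLt
        omega, ext_coe]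
    rw [hHankel, Matrix.det_submatrix_equiv_self e, hurwitzMinor, hkey, hsign, ha0]
    have hpow : ((-1:ℝ))^j * ((-1:ℝ))^j = 1 := by
      rw [← pow_add, ← two_mul, pow_mul]
      norm_num
    generalize (Matrix.of fun r c : Fin ((2*j+1)/2) =>
      ext s (((2*j : ℕ):ℤ) - 1 - (r:ℤ) - (c:ℤ))).det = D
    have h21 : ((-1:ℝ))^(2*j) = 1 := by
      rw [pow_mul]
      norm_num
    rw [eq_div_iff (pow_ne_zero _ hlc0)]
    linear_combination (-(D * p.leadingCoeff ^ (2*j))) * h21
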